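/- arXiv:2605.19965 — 3 statements merged into one kernel-verified Lean document; each statement's English description precedes it below -/
import Mathlib

section
/- Let ε > 0 and let C be an n×n real symmetric positive semidefinite matrix with diagonal part D, off-diagonal part O = C − D, Dᵉ = D + εI, and Bᵉ = (Dᵉ)^{-1/2} O (Dᵉ)^{-1/2}. Then the matrix I + Bᵉ is positive definite; equivalently, every eigenvalue λᵢ of the symmetric matrix Bᵉ satisfies λᵢ > −1. -/
open Matrix

/-- The diagonal matrix formed from the diagonal entries of `C`. -/
noncomputable def diagPart {n : ℕ} (C : Matrix (Fin n) (Fin n) ℝ) :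
    Matrix (Fin n) (Fin n) ℝ :=
  Matrix.diagonal fun i => C i i

/-- `(Dᵉ)⁻¹ᐟ²`, the inverse square root of `Dᵉ = diag(C) + ε I`
(a diagonal matrix with positive entries). -/
noncomputable def invSqrtRegDiag {n : ℕ} (C : Matrix (Fin n) (Fin n) ℝ) (ε : ℝ) :
    Matrix (Fin n) (Fin n) ℝ :=
  Matrix.diagonal fun i => (Real.sqrt (C i i + ε))⁻¹

/-- `Bᵉ = (Dᵉ)⁻¹ᐟ² O (Dᵉ)⁻¹ᐟ²`, the normalized off-diagonal matrix,
where `O = C - diag(C)`. -/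
noncomputable def normOffDiag {n : ℕ} (C : Matrix (Fin n) (Fin n) ℝ) (ε : ℝ) :
    Matrix (Fin n) (Fin n) ℝ :=
  invSqrtRegDiag C ε * (C - diagPart C) * invSqrtRegDiag C ε

lemma conj_posDef {n : ℕ} (A : Matrix (Fin n) (Fin n) ℝ) (d : Fin n → ℝ)
    (hA : A.PosDef) (hd : ∀ i, d i ≠ 0) :
    (Matrix.diagonal d * A * Matrix.diagonal d).PosDef := by
  set S := Matrix.diagonal d with hS
  have hSsymm : Sᵀ = S := Matrix.diagonal_transpose d
  refine Matrix.posDef_iff_dotProduct_mulVec.mpr ⟨?_, ?_⟩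
  · have hAh : Aᴴ = A := hA.isHermitian
    show (S * A * S)ᴴ = S * A * S
    have hAt : Aᵀ = A := by
      rw [← Matrix.conjTranspose_eq_transpose_of_trivial]; exact hAh
    simp only [Matrix.conjTranspose_eq_transpose_of_trivial, Matrix.transpose_mul,
      hSsymm, hAt, Matrix.mul_assoc]
  · intro x hx
    have hy : S *ᵥ x ≠ 0 := by
      obtain ⟨i, hi⟩ := Function.ne_iff.mp hx
      refine Function.ne_iff.mpr ⟨i, ?_⟩
      rw [Matrix.mulVec_diagonal]
      exact mul_ne_zero (hd i) hi
    have key : star x ⬝ᵥ (S * A * S) *ᵥ x = star (S *ᵥ x) ⬝ᵥ A *ᵥ (S *ᵥ x) := by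
      simp only [star_trivial, ← Matrix.mulVec_mulVec]
      rw [Matrix.dotProduct_mulVec x S, ← Matrix.mulVec_transpose, hSsymm,
        Matrix.mulVec_mulVec]
    rw [key]
    exact hA.dotProduct_mulVec_pos hy

/-- For ε > 0 and C an n×n real symmetric PSD matrix, the
matrix I + Bᵉ is positive definite; equivalently, every eigenvalue of the
symmetric matrix Bᵉ is strictly greater than −1. -/
theorem one_add_normOffDiag_posDef
    {n : ℕ} (ε : ℝ) (hε : 0 < ε)
    (C : Matrix (Fin n) (Fin n) ℝ) (hC : C.PosSemidef)
    (hB : (normOffDiag C ε).IsHermitian) :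
    (1 + normOffDiag C ε).PosDef ∧ ∀ i, -1 < hB.eigenvalues i := by
  have hdiag : ∀ i, 0 < C i i + ε := by
    intro i
    have h0 : (0:ℝ) ≤ C i i := by
      have := hC.dotProduct_mulVec_nonneg (Pi.single i 1)
      simpa using this
    linarith
  set d : Fin n → ℝ := fun i => (Real.sqrt (C i i + ε))⁻¹ with hd
  have hdpos : ∀ i, 0 < d i := fun i =>
    inv_pos.mpr (Real.sqrt_pos.mpr (hdiag i))
  -- key identity
  have hone : invSqrtRegDiag C ε * (diagPart C + Matrix.diagonal fun _ => ε) *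
      invSqrtRegDiag C ε = 1 := by
    rw [invSqrtRegDiag, diagPart, Matrix.diagonal_add, Matrix.diagonal_mul_diagonal,
      Matrix.diagonal_mul_diagonal]
    rw [show (1 : Matrix (Fin n) (Fin n) ℝ) = Matrix.diagonal fun _ => 1 from
      (Matrix.diagonal_one).symm]
    refine congrArg Matrix.diagonal (funext fun i => ?_)
    have hs : Real.sqrt (C i i + ε) * Real.sqrt (C i i + ε) = C i i + ε :=
      Real.mul_self_sqrt (hdiag i).le
    have hsne : Real.sqrt (C i i + ε) ≠ 0 := (Real.sqrt_pos.mpr (hdiag i)).ne'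
    rw [← hs]
    field_simp
    rw [Real.sqrt_sq (Real.sqrt_nonneg _)]
  have key : 1 + normOffDiag C ε =
      invSqrtRegDiag C ε * (C + Matrix.diagonal fun _ => ε) * invSqrtRegDiag C ε := by
    have : C + (Matrix.diagonal fun _ => ε) =
        (C - diagPart C) + (diagPart C + Matrix.diagonal fun _ => ε) := by abel
    rw [this, Matrix.mul_add, Matrix.add_mul, hone, normOffDiag]
    exact add_comm _ _
  have hM : (C + Matrix.diagonal fun _ => ε).PosDef :=
    Matrix.PosDef.posSemidef_add hC (Matrix.PosDef.diagonal fun _ => hε)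
  have hPD : (1 + normOffDiag C ε).PosDef := by
    rw [key, invSqrtRegDiag]
    exact conj_posDef _ d hM fun i => (hdpos i).ne'
  refine ⟨hPD, fun i => ?_⟩
  set v : EuclideanSpace ℝ (Fin n) := hB.eigenvectorBasis i with hv
  have hvne : (⇑v : Fin n → ℝ) ≠ 0 := by
    have := hB.eigenvectorBasis.orthonormal.ne_zero i
    intro h
    apply this
    ext j
    exact congrFun h j
  have hmul : normOffDiag C ε *ᵥ ⇑v = hB.eigenvalues i • ⇑v :=
    hB.mulVec_eigenvectorBasis i
  have hpos := hPD.dotProduct_mulVec_pos hvne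
  have hnorm : (⇑v : Fin n → ℝ) ⬝ᵥ ⇑v = 1 := by
    have h1 := hB.eigenvectorBasis.orthonormal.1 i
    have : (inner ℝ v v : ℝ) = 1 := by
      rw [real_inner_self_eq_norm_sq, h1]; norm_num
    rw [← this, PiLp.inner_apply]
    simp [dotProduct, sq]
  rw [Matrix.add_mulVec, Matrix.one_mulVec, hmul, dotProduct_add,
    dotProduct_smul] at hpos
  simp only [star_trivial, smul_eq_mul, hnorm, mul_one] at hpos
  linarith
end

section
/- Let λ₁, …, λₙ be real numbers with λᵢ > −1 for all i, and define R₂ = Σ_{i=1}^n [ log(1 + λᵢ) − λᵢ + (1/2) λᵢ² ]. Then |R₂| ≤ max{ (1/3) Σ_{i : λᵢ ≥ 0} λᵢ³ , (1/3) Σ_{i : λᵢ < 0} |λᵢ|³ / (1 + λᵢ) }. -/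
noncomputable def fR (x : ℝ) : ℝ := Real.log (1 + x) - x + (1 / 2) * x ^ 2

lemma fR_hasDeriv {x : ℝ} (hx : -1 < x) :
    HasDerivAt fR (x ^ 2 / (1 + x)) x := by
  have h1 : (0:ℝ) < 1 + x := by linarith
  have hlog : HasDerivAt (fun y : ℝ => Real.log (1 + y)) (1 / (1 + x)) x := by
    have := (Real.hasDerivAt_log (ne_of_gt h1)).comp x ((hasDerivAt_id x).const_add 1)
    simpa [Function.comp_def] using this
  have : HasDerivAt fR (1 / (1 + x) - 1 + (1/2) * (2 * x ^ 1)) x := by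
    exact (hlog.sub (hasDerivAt_id x)).add ((hasDerivAt_pow 2 x).const_mul (1/2))
  convert this using 1
  field_simp
  ring

lemma fR_nonneg {x : ℝ} (hx : 0 ≤ x) : 0 ≤ fR x := by
  have mono : MonotoneOn fR (Set.Ici (0:ℝ)) := by
    apply monotoneOn_of_hasDerivWithinAt_nonneg (f' := fun y => y ^ 2 / (1 + y))
      (convex_Ici 0)
    · intro y hy
      exact (fR_hasDeriv (by simp at hy; linarith)).continuousAt.continuousWithinAt
    · intro y hy
      exact (fR_hasDeriv (by simp [interior_Ici] at hy; linarith)).hasDerivWithinAt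
    · intro y hy
      simp [interior_Ici] at hy
      positivity
  have := mono (Set.mem_Ici.2 le_rfl) (Set.mem_Ici.2 hx) hx
  simpa [fR] using this

lemma fR_le_cube {x : ℝ} (hx : 0 ≤ x) : fR x ≤ (1/3) * x ^ 3 := by
  set g : ℝ → ℝ := fun y => (1/3) * y ^ 3 - fR y with hg
  have hderiv : ∀ y : ℝ, -1 < y → HasDerivAt g (y ^ 3 / (1 + y)) y := by
    intro y hy
    have h1 : (0:ℝ) < 1 + y := by linarith
    have : HasDerivAt g ((1/3) * (3 * y ^ 2) - y ^ 2 / (1 + y)) y :=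
      (((hasDerivAt_pow 3 y).const_mul (1/3)).sub (fR_hasDeriv hy))
    convert this using 1
    field_simp
    ring
  have mono : MonotoneOn g (Set.Ici (0:ℝ)) := by
    apply monotoneOn_of_hasDerivWithinAt_nonneg (f' := fun y => y ^ 3 / (1 + y))
      (convex_Ici 0)
    · intro y hy
      exact (hderiv y (by simp at hy; linarith)).continuousAt.continuousWithinAt
    · intro y hy
      exact (hderiv y (by simp [interior_Ici] at hy; linarith)).hasDerivWithinAt
    · intro y hy
      simp [interior_Ici] at hy
      positivity
  have := mono (Set.mem_Ici.2 le_rfl) (Set.mem_Ici.2 hx) hx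
  simp only [hg, fR] at this ⊢
  simp [Real.log_one] at this
  linarith

lemma fR_nonpos {x : ℝ} (hx1 : -1 < x) (hx : x ≤ 0) : fR x ≤ 0 := by
  have mono : MonotoneOn fR (Set.Ioc (-1:ℝ) 0) := by
    apply monotoneOn_of_hasDerivWithinAt_nonneg (f' := fun y => y ^ 2 / (1 + y))
      (convex_Ioc (-1) 0)
    · intro y hy
      exact (fR_hasDeriv hy.1).continuousAt.continuousWithinAt
    · intro y hy
      rw [interior_Ioc] at hy
      exact (fR_hasDeriv hy.1).hasDerivWithinAt
    · intro y hy
      rw [interior_Ioc] at hy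
      have : (0:ℝ) < 1 + y := by linarith [hy.1]
      positivity
  have := mono (Set.mem_Ioc.2 ⟨hx1, hx⟩) (Set.mem_Ioc.2 ⟨by norm_num, le_refl 0⟩) hx
  simpa [fR] using this

lemma fR_ge_neg {x : ℝ} (hx1 : -1 < x) (hx : x ≤ 0) :
    (1/3) * (x ^ 3 / (1 + x)) ≤ fR x := by
  set h : ℝ → ℝ := fun y => fR y - (1/3) * (y ^ 3 / (1 + y)) with hh
  have hderiv : ∀ y : ℝ, -1 < y → HasDerivAt h (y ^ 3 / (3 * (1 + y) ^ 2)) y := by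
    intro y hy
    have h1 : (0:ℝ) < 1 + y := by linarith
    have hq : HasDerivAt (fun z : ℝ => z ^ 3 / (1 + z))
        ((3 * y ^ 2 * (1 + y) - y ^ 3 * 1) / (1 + y) ^ 2) y := by
      exact (hasDerivAt_pow 3 y).div ((hasDerivAt_id y).const_add 1) (ne_of_gt h1)
    have : HasDerivAt h (y ^ 2 / (1 + y)
        - (1/3) * ((3 * y ^ 2 * (1 + y) - y ^ 3 * 1) / (1 + y) ^ 2)) y :=
      (fR_hasDeriv hy).sub (hq.const_mul (1/3))
    convert this using 1
    field_simp
    ring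
  have anti : AntitoneOn h (Set.Ioc (-1:ℝ) 0) := by
    apply antitoneOn_of_hasDerivWithinAt_nonpos (f' := fun y => y ^ 3 / (3 * (1 + y) ^ 2))
      (convex_Ioc (-1) 0)
    · intro y hy
      exact (hderiv y hy.1).continuousAt.continuousWithinAt
    · intro y hy
      rw [interior_Ioc] at hy
      exact (hderiv y hy.1).hasDerivWithinAt
    · intro y hy
      rw [interior_Ioc] at hy
      have h1 : (0:ℝ) < 1 + y := by linarith [hy.1]
      have hy3 : y ^ 3 ≤ 0 := by nlinarith [sq_nonneg y, hy.2]
      apply div_nonpos_of_nonpos_of_nonneg hy3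
      positivity
  have := anti (Set.mem_Ioc.2 ⟨hx1, hx⟩) (Set.mem_Ioc.2 ⟨by norm_num, le_refl 0⟩) hx
  simp only [hh, fR] at this
  simp only [fR]
  norm_num [Real.log_one] at this
  linarith

/-- Absolute-value bound on the second-order Taylor
remainder: for real numbers λᵢ > −1 and R₂ = Σᵢ [log(1 + λᵢ) − λᵢ + λᵢ²/2],
|R₂| ≤ max{(1/3) Σ_{λᵢ≥0} λᵢ³, (1/3) Σ_{λᵢ<0} |λᵢ|³/(1 + λᵢ)}. -/
theorem remainder_abs_max_bound
    {n : ℕ} (lam : Fin n → ℝ) (hlam : ∀ i, -1 < lam i) :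
    |∑ i, (Real.log (1 + lam i) - lam i + (1 / 2) * (lam i) ^ 2)|
      ≤ max ((1 / 3) * ∑ i ∈ Finset.univ.filter (fun i => 0 ≤ lam i), (lam i) ^ 3)
            ((1 / 3) * ∑ i ∈ Finset.univ.filter (fun i => lam i < 0),
                |lam i| ^ 3 / (1 + lam i)) := by
  classical
  set S := ∑ i, (Real.log (1 + lam i) - lam i + (1 / 2) * (lam i) ^ 2) with hS
  have hsplit : S = (∑ i ∈ Finset.univ.filter (fun i => 0 ≤ lam i), fR (lam i))
      + ∑ i ∈ Finset.univ.filter (fun i => ¬ 0 ≤ lam i), fR (lam i) := by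
    rw [hS, ← Finset.sum_filter_add_sum_filter_not Finset.univ (fun i => 0 ≤ lam i)]
    rfl
  have hfilter : Finset.univ.filter (fun i => ¬ 0 ≤ lam i)
      = Finset.univ.filter (fun i => lam i < 0) := by
    apply Finset.filter_congr
    intro i _
    simp [not_le]
  set A := (1 / 3) * ∑ i ∈ Finset.univ.filter (fun i => 0 ≤ lam i), (lam i) ^ 3 with hA
  set B := (1 / 3) * ∑ i ∈ Finset.univ.filter (fun i => lam i < 0),
      |lam i| ^ 3 / (1 + lam i) with hB
  have hpos_le : (∑ i ∈ Finset.univ.filter (fun i => 0 ≤ lam i), fR (lam i)) ≤ A := by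
    rw [hA, Finset.mul_sum]
    apply Finset.sum_le_sum
    intro i hi
    simp only [Finset.mem_filter] at hi
    exact fR_le_cube hi.2
  have hpos_nn : 0 ≤ ∑ i ∈ Finset.univ.filter (fun i => 0 ≤ lam i), fR (lam i) := by
    apply Finset.sum_nonneg
    intro i hi
    simp only [Finset.mem_filter] at hi
    exact fR_nonneg hi.2
  have hneg_np : (∑ i ∈ Finset.univ.filter (fun i => lam i < 0), fR (lam i)) ≤ 0 := by
    apply Finset.sum_nonpos
    intro i hi
    simp only [Finset.mem_filter] at hi
    exact fR_nonpos (hlam i) hi.2.le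
  have hneg_ge : -B ≤ ∑ i ∈ Finset.univ.filter (fun i => lam i < 0), fR (lam i) := by
    rw [hB, Finset.mul_sum, ← Finset.sum_neg_distrib]
    apply Finset.sum_le_sum
    intro i hi
    simp only [Finset.mem_filter] at hi
    have h := fR_ge_neg (hlam i) hi.2.le
    have habs : |lam i| ^ 3 = -(lam i ^ 3) := by
      rw [abs_of_neg hi.2]; ring
    rw [habs]
    calc -(1/3 * (-(lam i ^ 3) / (1 + lam i))) = (1/3) * (lam i ^ 3 / (1 + lam i)) := by ring
    _ ≤ fR (lam i) := h
  rw [hsplit, hfilter]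
  rw [abs_le]
  constructor
  · have hBA : B ≤ max A B := le_max_right A B
    linarith
  · have := le_max_left A B
    linarith
end

section
/- Let ε > 0 and let C be an n×n real symmetric positive semidefinite matrix with diagonal part D, off-diagonal part O = C − D, Dᵉ = D + εI, and Bᵉ = (Dᵉ)^{-1/2} O (Dᵉ)^{-1/2}, with eigenvalues λ₁, …, λₙ of Bᵉ and λ_min = minᵢ λᵢ. Let R₂ = Σ_{i=1}^n [ log(1 + λᵢ) − λᵢ + (1/2) λᵢ² ]. Then |R₂| ≤ ‖Bᵉ‖_F² · ‖Bᵉ‖₂ / (3(1 + λ_min)), where ‖·‖_F is the Frobenius norm and ‖·‖₂ is the spectral norm. -/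
open Matrix

open intervalIntegral in
/-- Cubic Taylor-remainder bound for `log (1 + x)`. -/
lemma taylor_log_bound {m x : ℝ} (hm : -1 < m) (hm0 : m ≤ 0) (hmx : m ≤ x) :
    |Real.log (1 + x) - x + (1/2) * x ^ 2| ≤ |x| ^ 3 / (3 * (1 + m)) := by
  have hm1 : (0:ℝ) < 1 + m := by linarith
  have hx1 : (0:ℝ) < 1 + x := by linarith
  have hderiv : ∀ t ∈ Set.uIcc (0:ℝ) x, HasDerivAt (fun t => Real.log (1 + t) - t + (1/2) * t ^ 2)
      (t ^ 2 / (1 + t)) t := by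
    intro t ht
    have ht1 : (0:ℝ) < 1 + t := by
      rcases Set.mem_uIcc.1 ht with h | h
      · rcases le_total 0 x with h' | h' <;> nlinarith [h.1, h.2]
      · nlinarith [h.1, h.2]
    have h1 : HasDerivAt (fun t : ℝ => Real.log (1 + t)) (1 / (1 + t)) t := by
      simpa using ((hasDerivAt_id t).const_add 1).log ht1.ne'
    have h2 : HasDerivAt (fun t : ℝ => Real.log (1 + t) - t + (1/2) * t ^ 2)
        (1 / (1 + t) - 1 + (1/2) * (2 * t)) t := by
      exact (h1.sub (hasDerivAt_id t)).add
        (((hasDerivAt_pow 2 t).const_mul (1/2 : ℝ)).congr_deriv (by ring))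
    convert h2 using 1
    field_simp
    ring
  have hcont : IntervalIntegrable (fun t => t ^ 2 / (1 + t)) MeasureTheory.volume 0 x := by
    apply ContinuousOn.intervalIntegrable
    apply ContinuousOn.div (continuousOn_pow 2) (by fun_prop)
    intro t ht
    rcases Set.mem_uIcc.1 ht with h | h
    · rcases le_total 0 x with h' | h' <;> nlinarith [h.1, h.2]
    · nlinarith [h.1, h.2]
  have hFTC : ∫ t in (0:ℝ)..x, t ^ 2 / (1 + t)
      = Real.log (1 + x) - x + (1/2) * x ^ 2 := by
    rw [integral_eq_sub_of_hasDerivAt hderiv hcont]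
    simp
  have hconst : IntervalIntegrable (fun t : ℝ => t ^ 2 / (1 + m)) MeasureTheory.volume 0 x :=
    ((continuousOn_pow 2).div_const _).intervalIntegrable
  have hconstval : ∫ t in (0:ℝ)..x, t ^ 2 / (1 + m) = x ^ 3 / (3 * (1 + m)) := by
    simp only [div_eq_mul_inv]
    rw [intervalIntegral.integral_mul_const, integral_pow]
    have h3 : (3:ℝ) * (1+m) ≠ 0 := by positivity
    field_simp
    norm_num
    ring
  rcases le_total 0 x with hx0 | hx0
  · have h1 : (0:ℝ) ≤ ∫ t in (0:ℝ)..x, t ^ 2 / (1 + t) := by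
      apply intervalIntegral.integral_nonneg hx0
      intro t ht
      have : (0:ℝ) < 1 + t := by nlinarith [ht.1, ht.2]
      positivity
    have h2 : (∫ t in (0:ℝ)..x, t ^ 2 / (1 + t)) ≤ ∫ t in (0:ℝ)..x, t ^ 2 / (1 + m) := by
      apply intervalIntegral.integral_mono_on hx0 hcont hconst
      intro t ht
      have ht1 : (0:ℝ) < 1 + t := by nlinarith [ht.1, ht.2]
      exact div_le_div_of_nonneg_left (by positivity) hm1 (by linarith [ht.1])
    rw [hconstval] at h2
    rw [abs_of_nonneg (by rw [← hFTC]; exact h1), abs_of_nonneg hx0]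
    linarith [hFTC]
  · have hswap : ∫ t in x..(0:ℝ), t ^ 2 / (1 + t) = -(Real.log (1 + x) - x + (1/2) * x ^ 2) := by
      rw [intervalIntegral.integral_symm 0 x, hFTC]
    have h1 : (0:ℝ) ≤ ∫ t in x..(0:ℝ), t ^ 2 / (1 + t) := by
      apply intervalIntegral.integral_nonneg hx0
      intro t ht
      have : (0:ℝ) < 1 + t := by nlinarith [ht.1, ht.2]
      positivity
    have h2 : (∫ t in x..(0:ℝ), t ^ 2 / (1 + t)) ≤ ∫ t in x..(0:ℝ), t ^ 2 / (1 + m) := by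
      apply intervalIntegral.integral_mono_on hx0 hcont.symm hconst.symm
      intro t ht
      have ht1 : (0:ℝ) < 1 + t := by nlinarith [ht.1, ht.2]
      exact div_le_div_of_nonneg_left (by positivity) hm1 (by linarith [ht.1])
    have hcv : ∫ t in x..(0:ℝ), t ^ 2 / (1 + m) = -(x ^ 3) / (3 * (1 + m)) := by
      rw [intervalIntegral.integral_symm 0 x, hconstval]; ring
    rw [hcv] at h2
    rw [abs_of_nonpos (by linarith [hswap, h1]), abs_of_nonpos hx0]
    have : -(x^3) = (-x)^3 := by ring
    linarith [hswap, h2, this ▸ h2]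

/-- Sum of squares of eigenvalues of a real symmetric matrix equals the squared
Frobenius norm. -/
lemma eig_sq_sum {n : ℕ} (A : Matrix (Fin n) (Fin n) ℝ) (hA : A.IsHermitian) :
    ∑ i, (hA.eigenvalues i) ^ 2 = ∑ i, ∑ j, (A i j) ^ 2 := by
  have h1 : (A * A).trace = ∑ i, ∑ j, (A i j) ^ 2 := by
    simp only [Matrix.trace, Matrix.diag, Matrix.mul_apply]
    refine Finset.sum_congr rfl fun i _ => Finset.sum_congr rfl fun j _ => ?_
    have := congrFun (congrFun hA.eq j) i
    simp only [conjTranspose_apply, star_trivial] at this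
    rw [sq, ← this]
  have h2 : (A * A).trace = ∑ i, (hA.eigenvalues i) ^ 2 := by
    conv_lhs => rw [hA.spectral_theorem, Unitary.conjStarAlgAut_apply]
    set U := (hA.eigenvectorUnitary : Matrix (Fin n) (Fin n) ℝ)
    set D : Matrix (Fin n) (Fin n) ℝ := diagonal (RCLike.ofReal ∘ hA.eigenvalues) with hD
    have hU : star U * U = 1 := hA.eigenvectorUnitary.2.1
    have : U * D * star U * (U * D * star U) = U * (D * D) * star U := by
      calc U * D * star U * (U * D * star U) = U * (D * ((star U * U) * (D * star U))) := by
            simp only [mul_assoc]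
        _ = U * (D * D) * star U := by rw [hU, one_mul]; simp only [mul_assoc]
    rw [this, Matrix.trace_mul_cycle, ← mul_assoc, hU, one_mul, hD]
    rw [diagonal_mul_diagonal, Matrix.trace_diagonal]
    simp [sq]
  rw [← h2, h1]

/-- Trace is the sum of the eigenvalues (real symmetric case). -/
lemma eig_sum {n : ℕ} (A : Matrix (Fin n) (Fin n) ℝ) (hA : A.IsHermitian) :
    ∑ i, hA.eigenvalues i = A.trace := by
  conv_rhs => rw [hA.spectral_theorem, Unitary.conjStarAlgAut_apply]
  rw [Matrix.trace_mul_cycle, hA.eigenvectorUnitary.2.1, one_mul, Matrix.trace_diagonal]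
  simp

lemma smul_one_diag {n : ℕ} (ε : ℝ) :
    (ε • (1 : Matrix (Fin n) (Fin n) ℝ)) = diagonal (fun _ => ε) := by
  ext i j
  by_cases h : i = j <;> simp [Matrix.one_apply, Matrix.diagonal_apply, h]

lemma diag_nonneg {n : ℕ} {C : Matrix (Fin n) (Fin n) ℝ} (hC : C.PosSemidef) (i : Fin n) :
    0 ≤ C i i := by
  have := hC.dotProduct_mulVec_nonneg (Pi.single i 1)
  simpa [dotProduct, Pi.single_apply, mulVec] using this

/-- Conjugation of a positive definite matrix by an invertible diagonal matrix. -/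
lemma posDef_diag_conj {n : ℕ} {M : Matrix (Fin n) (Fin n) ℝ} (hM : M.PosDef)
    (d : Fin n → ℝ) (hd : ∀ i, d i ≠ 0) :
    (diagonal d * M * diagonal d).PosDef := by
  refine PosDef.of_dotProduct_mulVec_pos ?_ ?_
  · show (diagonal d * M * diagonal d)ᴴ = _
    rw [conjTranspose_mul, conjTranspose_mul, diagonal_conjTranspose, hM.1.eq]
    have : star d = d := by funext i; simp
    rw [this, mul_assoc]
  · intro x hx
    have hx' : (diagonal d) *ᵥ x ≠ 0 := by
      intro h
      apply hx
      funext i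
      have := congrFun h i
      simp [mulVec_diagonal] at this
      rcases this with h | h
      · exact absurd h (hd i)
      · exact h
    have key : star x ⬝ᵥ ((diagonal d * M * diagonal d) *ᵥ x)
        = star ((diagonal d) *ᵥ x) ⬝ᵥ (M *ᵥ ((diagonal d) *ᵥ x)) := by
      rw [← mulVec_mulVec, ← mulVec_mulVec, Matrix.dotProduct_mulVec (star x)]
      congr 1
      funext j
      simp [vecMul_diagonal, mulVec_diagonal, mul_comm]
    rw [key]
    exact hM.dotProduct_mulVec_pos hx'

lemma one_add_normOffDiag {n : ℕ} (ε : ℝ) (hε : 0 < ε)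
    (C : Matrix (Fin n) (Fin n) ℝ) (hC : C.PosSemidef) :
    (1 : Matrix (Fin n) (Fin n) ℝ) + normOffDiag C ε
      = invSqrtRegDiag C ε * (C + ε • 1) * invSqrtRegDiag C ε := by
  have hdiag : ∀ i, 0 < C i i + ε := fun i =>
    add_pos_of_nonneg_of_pos (diag_nonneg hC i) hε
  have key : invSqrtRegDiag C ε * (diagPart C + ε • 1) * invSqrtRegDiag C ε = 1 := by
    unfold invSqrtRegDiag diagPart
    rw [smul_one_diag (n := n) ε, diagonal_add, diagonal_mul_diagonal, diagonal_mul_diagonal,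
      ← diagonal_one]
    have hfun : (fun i => (Real.sqrt (C i i + ε))⁻¹ * (C i i + ε) * (Real.sqrt (C i i + ε))⁻¹)
        = fun _ => (1:ℝ) := by
      funext i
      have h1 : Real.sqrt (C i i + ε) ≠ 0 := ne_of_gt (Real.sqrt_pos.mpr (hdiag i))
      field_simp
      exact (Real.sq_sqrt (hdiag i).le).symm
    rw [hfun]
  have expand : invSqrtRegDiag C ε * (C + ε • 1) * invSqrtRegDiag C ε
      = invSqrtRegDiag C ε * (C - diagPart C) * invSqrtRegDiag C ε
        + invSqrtRegDiag C ε * (diagPart C + ε • 1) * invSqrtRegDiag C ε := by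
    rw [← add_mul, ← mul_add]
    congr 2
    abel
  rw [expand, key, normOffDiag]
  abel

lemma posDef_one_add {n : ℕ} (ε : ℝ) (hε : 0 < ε)
    (C : Matrix (Fin n) (Fin n) ℝ) (hC : C.PosSemidef) :
    ((1 : Matrix (Fin n) (Fin n) ℝ) + normOffDiag C ε).PosDef := by
  rw [one_add_normOffDiag ε hε C hC]
  have hdiag : ∀ i, 0 < C i i + ε := fun i =>
    add_pos_of_nonneg_of_pos (diag_nonneg hC i) hε
  have hMe : (C + ε • 1).PosDef := by
    refine Matrix.PosDef.posSemidef_add hC ?_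
    rw [smul_one_diag (n := n) ε]
    exact posDef_diagonal_iff.mpr fun _ => hε
  exact posDef_diag_conj hMe _ (fun i => by
    have := hdiag i
    positivity)

/-- Each eigenvalue of the normalized off-diagonal matrix exceeds `-1`. -/
lemma eig_gt_neg_one {n : ℕ} (ε : ℝ) (hε : 0 < ε)
    (C : Matrix (Fin n) (Fin n) ℝ) (hC : C.PosSemidef)
    (hB : (normOffDiag C ε).IsHermitian) (i : Fin n) :
    -1 < hB.eigenvalues i := by
  have hPD := posDef_one_add ε hε C hC
  set v : Fin n → ℝ := ⇑(hB.eigenvectorBasis i) with hv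
  have hv0 : v ≠ 0 := by
    have := hB.eigenvectorBasis.orthonormal.ne_zero i
    intro h
    apply this
    ext j
    exact congrFun h j
  have hmv : (1 + normOffDiag C ε) *ᵥ v = (1 + hB.eigenvalues i) • v := by
    rw [add_mulVec, one_mulVec, hB.mulVec_eigenvectorBasis, add_smul, one_smul]
  have hpos := hPD.dotProduct_mulVec_pos hv0
  rw [hmv] at hpos
  have hvv : 0 < star v ⬝ᵥ v := Matrix.dotProduct_star_self_pos_iff.mpr hv0
  rw [dotProduct_smul, smul_eq_mul] at hpos
  nlinarith [hvv, hpos]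

/-- The normalized off-diagonal matrix has zero trace. -/
lemma trace_normOffDiag {n : ℕ} (C : Matrix (Fin n) (Fin n) ℝ) (ε : ℝ) :
    (normOffDiag C ε).trace = 0 := by
  unfold normOffDiag invSqrtRegDiag
  simp [Matrix.trace, Matrix.diag, Matrix.mul_diagonal, Matrix.diagonal_mul, Matrix.sub_apply,
    diagPart]

/-- With λᵢ the eigenvalues of the normalized off-diagonal
matrix Bᵉ, λ_min = minᵢ λᵢ, R₂ = Σᵢ [log(1 + λᵢ) − λᵢ + (1/2) λᵢ²],
squared Frobenius norm ‖Bᵉ‖_F² = Σᵢⱼ (Bᵉ)ᵢⱼ², and spectral norm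
‖Bᵉ‖₂ = maxᵢ |λᵢ|, one has |R₂| ≤ ‖Bᵉ‖_F² ‖Bᵉ‖₂ / (3(1 + λ_min)). -/
theorem remainder_frobenius_spectral_bound
    {n : ℕ} (hne : (Finset.univ : Finset (Fin n)).Nonempty)
    (ε : ℝ) (hε : 0 < ε)
    (C : Matrix (Fin n) (Fin n) ℝ) (hC : C.PosSemidef)
    (hB : (normOffDiag C ε).IsHermitian) :
    |∑ i, (Real.log (1 + hB.eigenvalues i) - hB.eigenvalues i
            + (1 / 2) * (hB.eigenvalues i) ^ 2)|
      ≤ (∑ i, ∑ j, (normOffDiag C ε i j) ^ 2)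
          * (Finset.univ.sup' hne fun i => |hB.eigenvalues i|)
          / (3 * (1 + Finset.univ.inf' hne hB.eigenvalues)) := by
  set lam := hB.eigenvalues with hlam
  set m := Finset.univ.inf' hne lam with hmdef
  set Msp := Finset.univ.sup' hne fun i => |lam i| with hMdef
  have hm_le : ∀ i, m ≤ lam i := fun i => Finset.inf'_le _ (Finset.mem_univ i)
  have hle_M : ∀ i, |lam i| ≤ Msp := fun i => Finset.le_sup' (fun j => |lam j|) (Finset.mem_univ i)
  have hm_gt : -1 < m := by
    obtain ⟨i0, _, hi0⟩ := Finset.exists_mem_eq_inf' hne lam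
    rw [hmdef, hi0]
    exact eig_gt_neg_one ε hε C hC hB i0
  have hsum0 : ∑ i, lam i = 0 := by
    rw [hlam, eig_sum _ hB, trace_normOffDiag]
  have hm0 : m ≤ 0 := by
    by_contra h
    push_neg at h
    have h1 : ∑ i, m ≤ ∑ i, lam i := Finset.sum_le_sum fun i _ => hm_le i
    rw [hsum0, Finset.sum_const, Finset.card_univ, Fintype.card_fin] at h1
    have hn : 0 < n := by
      obtain ⟨i, _⟩ := hne
      exact i.pos
    rw [nsmul_eq_mul] at h1
    have hn' : (0:ℝ) < (n:ℝ) := by exact_mod_cast hn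
    nlinarith [h1, h, hn']
  have hden : (0:ℝ) < 3 * (1 + m) := by nlinarith [hm_gt]
  have hMsp0 : 0 ≤ Msp := by
    obtain ⟨i0, _⟩ := hne
    exact le_trans (abs_nonneg (lam i0)) (hle_M i0)
  calc |∑ i, (Real.log (1 + lam i) - lam i + (1 / 2) * (lam i) ^ 2)|
      ≤ ∑ i, |Real.log (1 + lam i) - lam i + (1 / 2) * (lam i) ^ 2| :=
        Finset.abs_sum_le_sum_abs _ _
    _ ≤ ∑ i, |lam i| ^ 3 / (3 * (1 + m)) := by
        refine Finset.sum_le_sum fun i _ => ?_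
        have := taylor_log_bound hm_gt hm0 (hm_le i)
        simpa using this
    _ = (∑ i, |lam i| ^ 3) / (3 * (1 + m)) := by rw [Finset.sum_div]
    _ ≤ ((∑ i, ∑ j, (normOffDiag C ε i j) ^ 2) * Msp) / (3 * (1 + m)) := by
        have hnum : ∑ i, |lam i| ^ 3 ≤ (∑ i, ∑ j, (normOffDiag C ε i j) ^ 2) * Msp := by
          rw [← eig_sq_sum _ hB, ← hlam, Finset.sum_mul]
          refine Finset.sum_le_sum fun i _ => ?_
          have h3 : |lam i| ^ 3 = lam i ^ 2 * |lam i| := by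
            rw [pow_succ, sq_abs]
          rw [h3]
          exact mul_le_mul_of_nonneg_left (hle_M i) (sq_nonneg _)
        gcongr
    _ = _ := rfl
end
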